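/- Let p ∈ (1,∞), let f : ℝ^n → ℝ be convex, let λ > 0 and x ∈ ℝ^n. Then the function y ↦ f(y) + (1/(2λ))‖x−y‖_p² has exactly one global minimizer on ℝ^n. -/

import Mathlib

open Finset Filter

/-- The ℓ_p norm on `ℝⁿ` for `p ∈ (1,∞)`: `‖y‖_p = (Σ_i |y_i|^p)^(1/p)`. -/
noncomputable def lpNorm {n : ℕ} (p : ℝ) (y : Fin n → ℝ) : ℝ :=
  (∑ i, |y i| ^ p) ^ (1 / p)

section aux

variable {n : ℕ} {p : ℝ}

lemma lpSum_nonneg (y : Fin n → ℝ) : 0 ≤ ∑ i, |y i| ^ p :=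
  Finset.sum_nonneg fun i _ => Real.rpow_nonneg (abs_nonneg _) _

lemma lpNorm_nonneg (y : Fin n → ℝ) : 0 ≤ lpNorm p y :=
  Real.rpow_nonneg (lpSum_nonneg y) _

lemma strictConvexOn_abs_rpow (hp : 1 < p) :
    StrictConvexOn ℝ Set.univ (fun t : ℝ => |t| ^ p) := by
  have hp0 : 0 < p := by linarith
  refine ⟨convex_univ, fun u _ v _ huv a b ha hb hab => ?_⟩
  simp only [smul_eq_mul]
  have habs : |a * u + b * v| ≤ a * |u| + b * |v| := by
    calc |a * u + b * v| ≤ |a * u| + |b * v| := abs_add_le _ _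
    _ = a * |u| + b * |v| := by rw [abs_mul, abs_mul, abs_of_pos ha, abs_of_pos hb]
  rcases eq_or_ne |u| |v| with h | h
  · -- then v = -u, u ≠ 0
    have hv : v = -u := by
      rcases abs_eq_abs.mp h with h' | h'
      · exact absurd h' huv
      · linarith
    have hu0 : u ≠ 0 := by rintro rfl; simp [hv] at huv
    have hlt : |a * u + b * v| < a * |u| + b * |v| := by
      rw [hv, abs_neg]
      have : a * u + b * (-u) = (a - b) * u := by ring
      rw [this, abs_mul]
      have h1 : |a - b| < a + b := abs_sub_lt_of_nonneg_of_lt ha.le (by linarith) hb.le (by linarith)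
      have h2 : 0 < |u| := abs_pos.mpr hu0
      nlinarith
    have h3 : |a * u + b * v| ^ p < (a * |u| + b * |v|) ^ p :=
      Real.rpow_lt_rpow (abs_nonneg _) hlt hp0
    have h4 : (a * |u| + b * |v|) ^ p ≤ a * |u| ^ p + b * |v| ^ p := by
      have := (convexOn_rpow hp.le).2 (Set.mem_Ici.mpr (abs_nonneg u))
        (Set.mem_Ici.mpr (abs_nonneg v)) ha.le hb.le hab
      simpa using this
    linarith
  · have h3 : |a * u + b * v| ^ p ≤ (a * |u| + b * |v|) ^ p :=
      Real.rpow_le_rpow (abs_nonneg _) habs hp0.le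
    have h4 : (a * |u| + b * |v|) ^ p < a * |u| ^ p + b * |v| ^ p := by
      have := (strictConvexOn_rpow hp).2 (Set.mem_Ici.mpr (abs_nonneg u))
        (Set.mem_Ici.mpr (abs_nonneg v)) h ha hb hab
      simpa using this
    linarith

lemma strictConvexOn_lpSum (hp : 1 < p) :
    StrictConvexOn ℝ Set.univ (fun y : Fin n → ℝ => ∑ i, |y i| ^ p) := by
  refine ⟨convex_univ, fun y _ z _ hyz a b ha hb hab => ?_⟩
  obtain ⟨j, hj⟩ := Function.ne_iff.mp hyz
  simp only [smul_eq_mul, Pi.add_apply, Pi.smul_apply, smul_eq_mul, Finset.mul_sum,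
    ← Finset.sum_add_distrib]
  refine Finset.sum_lt_sum (fun i _ => ?_) ⟨j, Finset.mem_univ j, ?_⟩
  · have := (strictConvexOn_abs_rpow hp).convexOn.2 (Set.mem_univ (y i)) (Set.mem_univ (z i))
      ha.le hb.le hab
    simpa using this
  · have := (strictConvexOn_abs_rpow hp).2 (Set.mem_univ (y j)) (Set.mem_univ (z j)) hj ha hb hab
    simpa using this

lemma lpNorm_rpow (hp : 0 < p) (y : Fin n → ℝ) : lpNorm p y ^ p = ∑ i, |y i| ^ p := by
  rw [lpNorm, ← Real.rpow_mul (lpSum_nonneg y), one_div, inv_mul_cancel₀ hp.ne', Real.rpow_one]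

lemma lpNorm_smul (hp : 0 < p) {a : ℝ} (ha : 0 ≤ a) (y : Fin n → ℝ) :
    lpNorm p (a • y) = a * lpNorm p y := by
  unfold lpNorm
  have h1 : ∀ i, |a * y i| ^ p = a ^ p * |y i| ^ p := fun i => by
    rw [abs_mul, abs_of_nonneg ha, Real.mul_rpow ha (abs_nonneg _)]
  simp only [Pi.smul_apply, smul_eq_mul, h1, ← Finset.mul_sum]
  rw [Real.mul_rpow (Real.rpow_nonneg ha p) (lpSum_nonneg y),
    ← Real.rpow_mul ha, mul_one_div_cancel hp.ne', Real.rpow_one]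

lemma lpNorm_add_le (hp : 1 ≤ p) (y z : Fin n → ℝ) :
    lpNorm p (y + z) ≤ lpNorm p y + lpNorm p z := by
  simpa [lpNorm] using Real.Lp_add_le Finset.univ y z hp

lemma convexOn_lpNorm (hp : 1 < p) : ConvexOn ℝ Set.univ (lpNorm p (n := n)) := by
  refine ⟨convex_univ, fun y _ z _ a b ha hb hab => ?_⟩
  have hp0 : 0 < p := by linarith
  calc lpNorm p (a • y + b • z) ≤ lpNorm p (a • y) + lpNorm p (b • z) :=
        lpNorm_add_le hp.le _ _
    _ = a * lpNorm p y + b * lpNorm p z := by rw [lpNorm_smul hp0 ha, lpNorm_smul hp0 hb]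

lemma lpNorm_eq_zero (hp : 0 < p) {y : Fin n → ℝ} (h : lpNorm p y = 0) : y = 0 := by
  have hs : ∑ i, |y i| ^ p = 0 := by
    by_contra hne
    have hpos : 0 < ∑ i, |y i| ^ p := lt_of_le_of_ne (lpSum_nonneg y) (Ne.symm hne)
    have := Real.rpow_pos_of_pos hpos (1 / p)
    rw [lpNorm] at h
    exact absurd h this.ne'
  have h2 := (Finset.sum_eq_zero_iff_of_nonneg
    (fun i _ => Real.rpow_nonneg (abs_nonneg (y i)) p)).mp hs
  funext i
  have hi := h2 i (Finset.mem_univ i)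
  have : |y i| = 0 := by
    by_contra hyi
    have : 0 < |y i| := abs_pos.mpr (fun h' => hyi (by rw [h', abs_zero]))
    exact absurd hi (Real.rpow_pos_of_pos this p).ne'
  simpa using abs_eq_zero.mp this

lemma le_lpNorm (hp : 1 < p) (y : Fin n → ℝ) : ‖y‖ ≤ lpNorm p y := by
  have hp0 : 0 < p := by linarith
  rw [pi_norm_le_iff_of_nonneg (lpNorm_nonneg y)]
  intro i
  rw [Real.norm_eq_abs]
  have h1 : (|y i| ^ p) ^ (1 / p) = |y i| := by
    rw [← Real.rpow_mul (abs_nonneg _), mul_one_div_cancel hp0.ne', Real.rpow_one]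
  calc |y i| = (|y i| ^ p) ^ (1 / p) := h1.symm
    _ ≤ (∑ k, |y k| ^ p) ^ (1 / p) :=
        Real.rpow_le_rpow (Real.rpow_nonneg (abs_nonneg _) _)
          (Finset.single_le_sum (fun k _ => Real.rpow_nonneg (abs_nonneg _) _)
            (Finset.mem_univ i)) (by positivity)

lemma continuous_lpNorm (hp : 1 < p) : Continuous (lpNorm p (n := n)) := by
  unfold lpNorm
  have h1 : Continuous fun t : ℝ => t ^ (1 / p) :=
    continuous_iff_continuousAt.mpr fun t =>
      Real.continuousAt_rpow_const _ _ (Or.inr (by positivity))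
  have h2 : Continuous fun y : Fin n → ℝ => ∑ i, |y i| ^ p := by
    apply continuous_finset_sum
    intro i _
    have h3 : Continuous fun t : ℝ => t ^ p :=
      continuous_iff_continuousAt.mpr fun t =>
        Real.continuousAt_rpow_const _ _ (Or.inr (by linarith))
    exact h3.comp ((continuous_apply i).abs)
  exact h1.comp h2

lemma strictConvexOn_lpNorm_sq (hp : 1 < p) :
    StrictConvexOn ℝ Set.univ (fun y : Fin n → ℝ => lpNorm p y ^ 2) := by
  have hp0 : 0 < p := by linarith
  refine ⟨convex_univ, fun y _ z _ hyz a b ha hb hab => ?_⟩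
  simp only [smul_eq_mul]
  set Ny := lpNorm p y with hNy
  set Nz := lpNorm p z with hNz
  set m := a • y + b • z with hm
  have h0y : 0 ≤ Ny := lpNorm_nonneg y
  have h0z : 0 ≤ Nz := lpNorm_nonneg z
  have h0m : 0 ≤ lpNorm p m := lpNorm_nonneg m
  have hNm_le : lpNorm p m ≤ a * Ny + b * Nz :=
    (convexOn_lpNorm hp).2 (Set.mem_univ y) (Set.mem_univ z) ha.le hb.le hab
  rcases eq_or_ne Ny Nz with h | h
  · have hypos : 0 < Ny := by
      rcases h0y.lt_or_eq with h' | h'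
      · exact h'
      · exfalso
        have hy0 : y = 0 := lpNorm_eq_zero hp0 h'.symm
        have hz0 : z = 0 := lpNorm_eq_zero hp0 (by rw [← hNz, ← h]; exact h'.symm)
        exact hyz (hy0.trans hz0.symm)
    have hSm : lpNorm p m ^ p < a * Ny ^ p + b * Nz ^ p := by
      rw [lpNorm_rpow hp0, hNy, hNz, lpNorm_rpow hp0, lpNorm_rpow hp0]
      have := (strictConvexOn_lpSum hp).2 (Set.mem_univ y) (Set.mem_univ z) hyz ha hb hab
      simpa [hm] using this
    have hlt' : lpNorm p m ^ p < Ny ^ p := by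
      rw [← h] at hSm
      have hcomb : a * Ny ^ p + b * Ny ^ p = Ny ^ p := by rw [← add_mul, hab, one_mul]
      linarith
    have hlt : lpNorm p m < Ny := by
      by_contra hge
      push_neg at hge
      exact absurd (Real.rpow_le_rpow hypos.le hge hp0.le) (not_le.mpr hlt')
    have hsq : lpNorm p m ^ 2 < Ny ^ 2 := by nlinarith
    rw [← h]
    have hcomb : a * Ny ^ 2 + b * Ny ^ 2 = Ny ^ 2 := by rw [← add_mul, hab, one_mul]
    linarith
  · have h1 : lpNorm p m ^ 2 ≤ (a * Ny + b * Nz) ^ 2 := by nlinarith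
    have hsqpos : 0 < (Ny - Nz) ^ 2 := by
      rcases (sub_ne_zero.mpr h).lt_or_gt with h' | h' <;> nlinarith
    have h2 : (a * Ny + b * Nz) ^ 2 < a * Ny ^ 2 + b * Nz ^ 2 := by
      have hid : a * Ny ^ 2 + b * Nz ^ 2 - (a * Ny + b * Nz) ^ 2 = a * b * (Ny - Nz) ^ 2 := by
        have hb' : b = 1 - a := by linarith
        rw [hb']; ring
      have hpos := mul_pos (mul_pos ha hb) hsqpos
      linarith
    linarith
end aux

/-- For `p ∈ (1,∞)`, a convex `f : ℝⁿ → ℝ`, `λ > 0` and `x ∈ ℝⁿ`, the function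
`y ↦ f(y) + (1/(2λ))‖x−y‖_p²` has exactly one global minimizer. -/
theorem stmt3 {n : ℕ} (p : ℝ) (hp1 : 1 < p)
    (f : (Fin n → ℝ) → ℝ) (hf : ConvexOn ℝ Set.univ f)
    (lam : ℝ) (hlam : 0 < lam) (x : Fin n → ℝ) :
    ∃! y₀ : Fin n → ℝ, ∀ y,
      f y₀ + 1 / (2 * lam) * lpNorm p (x - y₀) ^ 2 ≤
        f y + 1 / (2 * lam) * lpNorm p (x - y) ^ 2 := by
  set c : ℝ := 1 / (2 * lam) with hc
  have hcpos : 0 < c := by positivity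
  set g : (Fin n → ℝ) → ℝ := fun y => f y + c * lpNorm p (x - y) ^ 2 with hgdef
  -- strict convexity of the quadratic part
  have hq : StrictConvexOn ℝ Set.univ fun y : Fin n → ℝ => c * lpNorm p (x - y) ^ 2 := by
    refine ⟨convex_univ, fun y _ z _ hyz a b ha hb hab => ?_⟩
    have hxm : x - (a • y + b • z) = a • (x - y) + b • (x - z) := by
      have h1 : a • (x - y) + b • (x - z) = (a + b) • x - (a • y + b • z) := by
        rw [smul_sub, smul_sub, add_smul]; abel
      rw [h1, hab, one_smul]
    have hne : (x - y) ≠ (x - z) := fun hcon => hyz (by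
      have := congrArg (fun v => x - v) (sub_right_injective hcon)
      exact sub_right_injective hcon)
    have := (strictConvexOn_lpNorm_sq hp1 (n := n)).2 (Set.mem_univ (x - y))
      (Set.mem_univ (x - z)) hne ha hb hab
    simp only [smul_eq_mul] at this ⊢
    rw [hxm]
    nlinarith [this]
  have hgsc : StrictConvexOn ℝ Set.univ g := hf.add_strictConvexOn hq
  -- continuity
  have hfc : Continuous f := hf.locallyLipschitz.continuous
  have hNc : Continuous fun y : Fin n → ℝ => lpNorm p (x - y) :=
    (continuous_lpNorm hp1).comp (continuous_const.sub continuous_id)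
  have hgc : Continuous g := hfc.add ((continuous_const.mul (hNc.pow 2)))
  -- lower bound for f
  obtain ⟨m, hm⟩ : ∃ m, ∀ z ∈ Metric.closedBall x 1, m ≤ f z := by
    have hK : IsCompact (Metric.closedBall x 1) := isCompact_closedBall x 1
    obtain ⟨z₀, _, hmin⟩ := hK.exists_isMinOn ⟨x, by simp⟩ hfc.continuousOn
    exact ⟨f z₀, fun z hz => hmin hz⟩
  set M : ℝ := f x - m with hM
  have hM0 : 0 ≤ M := sub_nonneg.mpr (hm x (by simp))
  have hflb : ∀ y, m - M * ‖y - x‖ ≤ f y := by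
    intro y
    rcases le_or_gt ‖y - x‖ 1 with hy | hy
    · have h1 : m ≤ f y := hm y (by simpa [Metric.mem_closedBall, dist_eq_norm] using hy)
      nlinarith [norm_nonneg (y - x)]
    · set t : ℝ := ‖y - x‖ with ht
      have ht0 : 0 < t := by linarith
      set z : Fin n → ℝ := x + t⁻¹ • (y - x) with hz
      have hzball : z ∈ Metric.closedBall x 1 := by
        rw [Metric.mem_closedBall, dist_eq_norm]
        have h1 : z - x = t⁻¹ • (y - x) := by rw [hz]; abel
        rw [h1, norm_smul, Real.norm_eq_abs, abs_of_pos (inv_pos.mpr ht0), ← ht,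
          inv_mul_cancel₀ ht0.ne']
      have hzcomb : z = (1 - t⁻¹) • x + t⁻¹ • y := by
        rw [hz, smul_sub, sub_smul, one_smul]; abel
      have ht1 : t⁻¹ ≤ 1 := by
        rw [inv_le_one_iff₀]; right; linarith
      have hfz := hf.2 (Set.mem_univ x) (Set.mem_univ y)
        (by linarith : (0:ℝ) ≤ 1 - t⁻¹) (by positivity : (0:ℝ) ≤ t⁻¹) (by ring)
      rw [← hzcomb] at hfz
      have hmz : m ≤ f z := hm z hzball
      simp only [smul_eq_mul] at hfz
      have h2 : t * m ≤ t * ((1 - t⁻¹) * f x + t⁻¹ * f y) :=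
        mul_le_mul_of_nonneg_left (hmz.trans hfz) ht0.le
      have h3 : t * ((1 - t⁻¹) * f x + t⁻¹ * f y) = (t - 1) * f x + f y := by
        field_simp
      rw [h3] at h2
      nlinarith
  -- coercivity bound
  have key : ∀ y, m - M * ‖y - x‖ + c * ‖y - x‖ ^ 2 ≤ g y := by
    intro y
    have h1 := hflb y
    have h2 : ‖y - x‖ ≤ lpNorm p (x - y) := by
      have := le_lpNorm hp1 (x - y)
      rwa [norm_sub_rev] at this
    have h3 : ‖y - x‖ ^ 2 ≤ lpNorm p (x - y) ^ 2 := by nlinarith [norm_nonneg (y - x)]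
    have h4 := mul_le_mul_of_nonneg_left h3 hcpos.le
    simp only [hgdef]
    linarith
  have hcoer : Tendsto g (cocompact (Fin n → ℝ)) atTop := by
    have hnorm : Tendsto (fun y : Fin n → ℝ => ‖y - x‖) (cocompact _) atTop := by
      refine tendsto_atTop_mono (fun y => norm_sub_norm_le y x) ?_
      exact tendsto_atTop_add_const_right _ (-‖x‖) tendsto_norm_cocompact_atTop
    have hphi : Tendsto (fun t : ℝ => m - M * t + c * t ^ 2) atTop atTop := by
      have h1 : Tendsto (fun t : ℝ => c * t) atTop atTop :=
        Tendsto.const_mul_atTop hcpos tendsto_id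
      have h2 : Tendsto (fun t : ℝ => c * t - M) atTop atTop :=
        tendsto_atTop_add_const_right _ (-M) h1
      have h3 : Tendsto (fun t : ℝ => t * (c * t - M)) atTop atTop :=
        Tendsto.atTop_mul_atTop₀ tendsto_id h2
      have h4 : Tendsto (fun t : ℝ => t * (c * t - M) + m) atTop atTop :=
        tendsto_atTop_add_const_right _ m h3
      have heq : (fun t : ℝ => t * (c * t - M) + m) = fun t : ℝ => m - M * t + c * t ^ 2 := by
        funext t; ring
      rwa [heq] at h4
    exact tendsto_atTop_mono key (hphi.comp hnorm)
  obtain ⟨y₀, hy₀⟩ := hgc.exists_forall_le hcoer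
  refine ⟨y₀, fun y => hy₀ y, ?_⟩
  intro y₁ hy₁
  by_contra hne
  have hne' : y₁ ≠ y₀ := hne
  have h0 : g y₀ = g y₁ := le_antisymm (hy₀ y₁) (hy₁ y₀)
  have hmid := hgsc.2 (Set.mem_univ y₁) (Set.mem_univ y₀) hne'
    one_half_pos one_half_pos (by norm_num : (1:ℝ)/2 + 1/2 = 1)
  have hy₀mid := hy₀ ((1/2 : ℝ) • y₁ + (1/2 : ℝ) • y₀)
  have hlt := lt_of_le_of_lt hy₀mid hmid
  rw [h0] at hlt
  simp only [smul_eq_mul] at hlt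
  linarith
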